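/- Truncated exponential approximation: Let D be a complex number with |D| ≤ V for some V ≥ 1. Then exp(2·Re D) = (1 + O(e^{-9V}))·|∑_{j ≤ 10V} D^j/j!|², where the implied constant is absolute. -/

import Mathlib

open Finset

private lemma pow_div_factorial_le_exp' (M : ℕ) :
    (M : ℝ) ^ M / (Nat.factorial M) ≤ Real.exp M := by
  refine le_trans ?_ (Real.sum_le_exp_of_nonneg (Nat.cast_nonneg M) (M + 1))
  exact Finset.single_le_sum (f := fun i => (M : ℝ) ^ i / (Nat.factorial i))
    (fun i _ => by positivity) (Finset.self_mem_range_succ M)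

private lemma exp_two_point_two_le' : Real.exp 2.2 ≤ 10 := by
  have h11 : Real.exp 2.2 ^ (5 : ℕ) = Real.exp 1 ^ (11 : ℕ) := by
    rw [← Real.exp_nat_mul, ← Real.exp_nat_mul]; norm_num
  have h2 : Real.exp 1 ^ (11 : ℕ) ≤ (2.7182818286 : ℝ) ^ (11 : ℕ) :=
    pow_le_pow_left₀ (Real.exp_pos 1).le Real.exp_one_lt_d9.le 11
  have h3 : (2.7182818286 : ℝ) ^ (11 : ℕ) ≤ 10 ^ (5 : ℕ) := by norm_num
  have h4 : Real.exp 2.2 ^ (5 : ℕ) ≤ 10 ^ (5 : ℕ) := by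
    rw [h11]; exact le_trans h2 h3
  exact le_of_pow_le_pow_left₀ (by norm_num) (by norm_num) h4

private lemma key_bound' (V : ℝ) (hV : 1 ≤ V) :
    V ^ (⌊10 * V⌋₊ + 1) / (Nat.factorial (⌊10 * V⌋₊ + 1)) ≤ Real.exp (-12 * V) := by
  set M := ⌊10 * V⌋₊ + 1 with hMdef
  have hV0 : (0 : ℝ) < V := lt_of_lt_of_le one_pos hV
  have hM : 10 * V ≤ (M : ℝ) := by
    have h := Nat.lt_floor_add_one (10 * V)
    rw [hMdef]; push_cast; linarith
  have hMpos : (0 : ℝ) < M := by linarith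
  have h1 : (M : ℝ) ^ M ≤ Real.exp M * Nat.factorial M := by
    have h := pow_div_factorial_le_exp' M
    rw [div_le_iff₀ (by positivity)] at h
    linarith
  have h2 : V ^ M / (Nat.factorial M : ℝ) ≤ V ^ M * Real.exp M / (M : ℝ) ^ M := by
    rw [div_le_div_iff₀ (by positivity) (by positivity)]
    nlinarith [pow_nonneg hV0.le M, pow_pos hV0 M,
      mul_le_mul_of_nonneg_left h1 (pow_nonneg hV0.le M)]
  have h3 : V ^ M * Real.exp M / (M : ℝ) ^ M = (V / (M : ℝ)) ^ M * Real.exp M := by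
    rw [div_pow]; ring
  have h4 : (V / (M : ℝ)) ^ M ≤ (1 / 10 : ℝ) ^ M := by
    apply pow_le_pow_left₀ (by positivity)
    rw [div_le_div_iff₀ hMpos (by norm_num)]
    linarith
  have h5 : (1 / 10 : ℝ) ^ M * Real.exp M = (Real.exp 1 / 10) ^ M := by
    rw [show Real.exp (M : ℝ) = Real.exp 1 ^ M by rw [← Real.exp_nat_mul]; norm_num,
      div_pow, div_pow, one_pow]
    ring
  have h6 : Real.exp 1 / 10 ≤ Real.exp (-1.2) := by
    rw [div_le_iff₀ (by norm_num), Real.exp_neg]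
    rw [inv_mul_eq_div, le_div_iff₀ (Real.exp_pos _)]
    calc Real.exp 1 * Real.exp 1.2 = Real.exp 2.2 := by
          rw [← Real.exp_add]; norm_num
      _ ≤ 10 := exp_two_point_two_le'
  have h7 : (Real.exp 1 / 10) ^ M ≤ Real.exp (-1.2) ^ M :=
    pow_le_pow_left₀ (by positivity) h6 M
  have h8 : Real.exp (-1.2) ^ M = Real.exp ((M : ℝ) * (-1.2)) := by
    rw [Real.exp_nat_mul]
  have h9 : Real.exp ((M : ℝ) * (-1.2)) ≤ Real.exp (-12 * V) := by
    apply Real.exp_le_exp.mpr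
    nlinarith
  calc V ^ M / (Nat.factorial M : ℝ)
      ≤ V ^ M * Real.exp M / (M : ℝ) ^ M := h2
    _ = (V / (M : ℝ)) ^ M * Real.exp M := h3
    _ ≤ (1 / 10 : ℝ) ^ M * Real.exp M := by
        have := Real.exp_pos (M : ℝ)
        nlinarith
    _ = (Real.exp 1 / 10) ^ M := h5
    _ ≤ Real.exp (-1.2) ^ M := h7
    _ = Real.exp ((M : ℝ) * (-1.2)) := h8
    _ ≤ Real.exp (-12 * V) := h9

set_option maxHeartbeats 1000000 in
private lemma tail_bound' (V : ℝ) (hV : 1 ≤ V) (D : ℂ) (hD : ‖D‖ ≤ V) :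
    ‖Complex.exp D -
        ∑ j ∈ Finset.range (⌊10 * V⌋₊ + 1), D ^ j / (Nat.factorial j)‖ ≤
      2 * Real.exp (-12 * V) := by
  set M := ⌊10 * V⌋₊ + 1 with hMdef
  have hV0 : (0 : ℝ) < V := lt_of_lt_of_le one_pos hV
  have hM : 10 * V ≤ (M : ℝ) := by
    have h := Nat.lt_floor_add_one (10 * V)
    rw [hMdef]; push_cast; linarith
  have hDnn : 0 ≤ ‖D‖ := norm_nonneg _
  have hsum : Summable (fun n : ℕ => D ^ n / (Nat.factorial n : ℂ)) :=
    NormedSpace.expSeries_div_summable D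
  have hnorm : Summable (fun n : ℕ => ‖D ^ n / (Nat.factorial n : ℂ)‖) :=
    NormedSpace.norm_expSeries_div_summable D
  have hexp : Complex.exp D = ∑' n : ℕ, D ^ n / (Nat.factorial n : ℂ) := by
    rw [Complex.exp_eq_exp_ℂ, NormedSpace.exp_eq_tsum_div]
  have htail : Complex.exp D - ∑ j ∈ Finset.range M, D ^ j / (Nat.factorial j : ℂ)
      = ∑' n : ℕ, D ^ (n + M) / (Nat.factorial (n + M) : ℂ) := by
    rw [hexp, ← Summable.sum_add_tsum_nat_add M hsum]; ring
  have hterm : ∀ n : ℕ, ‖D ^ (n + M) / (Nat.factorial (n + M) : ℂ)‖ ≤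
      (V ^ M / Nat.factorial M) * (1 / 10 : ℝ) ^ n := by
    intro n
    have hfac : (Nat.factorial M : ℝ) * ((M : ℝ) + 1) ^ n ≤ (Nat.factorial (n + M) : ℝ) := by
      have h := Nat.factorial_mul_pow_le_factorial (m := M) (n := n)
      rw [add_comm n M]
      exact_mod_cast h
    have h1 : ‖D ^ (n + M) / (Nat.factorial (n + M) : ℂ)‖
        = ‖D‖ ^ (n + M) / (Nat.factorial (n + M) : ℝ) := by
      rw [norm_div, norm_pow, Complex.norm_natCast]
    have h2 : ‖D‖ ^ (n + M) ≤ V ^ M * V ^ n := by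
      rw [pow_add]
      exact mul_le_mul (pow_le_pow_left₀ hDnn hD n) (pow_le_pow_left₀ hDnn hD M)
        (by positivity) (by positivity) |>.trans_eq (mul_comm _ _)
    rw [h1]
    calc ‖D‖ ^ (n + M) / (Nat.factorial (n + M) : ℝ)
        ≤ (V ^ M * V ^ n) / ((Nat.factorial M : ℝ) * ((M : ℝ) + 1) ^ n) :=
          div_le_div₀ (by positivity) h2 (by positivity) hfac
      _ = (V ^ M / Nat.factorial M) * (V / ((M : ℝ) + 1)) ^ n := by
          rw [mul_div_mul_comm, div_pow]
      _ ≤ (V ^ M / Nat.factorial M) * (1 / 10 : ℝ) ^ n := by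
          refine mul_le_mul_of_nonneg_left (pow_le_pow_left₀ (by positivity) ?_ n) (by positivity)
          rw [div_le_div_iff₀ (by linarith) (by norm_num)]
          linarith
  have hgsum : Summable (fun n : ℕ => (V ^ M / Nat.factorial M) * (1 / 10 : ℝ) ^ n) :=
    (summable_geometric_of_lt_one (by norm_num) (by norm_num)).mul_left _
  have hns : Summable (fun n : ℕ => ‖D ^ (n + M) / (Nat.factorial (n + M) : ℂ)‖) :=
    (summable_nat_add_iff M).mpr hnorm
  have hkey := key_bound' V hV
  calc ‖Complex.exp D - ∑ j ∈ Finset.range M, D ^ j / (Nat.factorial j : ℂ)‖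
      = ‖∑' n : ℕ, D ^ (n + M) / (Nat.factorial (n + M) : ℂ)‖ := by rw [htail]
    _ ≤ ∑' n : ℕ, ‖D ^ (n + M) / (Nat.factorial (n + M) : ℂ)‖ := norm_tsum_le_tsum_norm hns
    _ ≤ ∑' n : ℕ, (V ^ M / Nat.factorial M) * (1 / 10 : ℝ) ^ n :=
        Summable.tsum_le_tsum hterm hns hgsum
    _ = (V ^ M / Nat.factorial M) * (1 - 1 / 10 : ℝ)⁻¹ := by
        rw [tsum_mul_left, tsum_geometric_of_lt_one (by norm_num) (by norm_num)]
    _ ≤ 2 * (V ^ M / Nat.factorial M) := by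
        have h0 : (0 : ℝ) ≤ V ^ M / Nat.factorial M := by positivity
        nlinarith
    _ ≤ 2 * Real.exp (-12 * V) := by linarith

set_option maxHeartbeats 1000000 in
theorem truncated_exponential_approximation :
    ∃ C : ℝ, 0 < C ∧ ∀ V : ℝ, 1 ≤ V → ∀ D : ℂ, ‖D‖ ≤ V →
      |Real.exp (2 * D.re) -
          ‖∑ j ∈ Finset.range (⌊10 * V⌋₊ + 1), D ^ j / (Nat.factorial j)‖ ^ 2| ≤
        C * Real.exp (-9 * V) *
          ‖∑ j ∈ Finset.range (⌊10 * V⌋₊ + 1), D ^ j / (Nat.factorial j)‖ ^ 2 := by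
  refine ⟨24, by norm_num, fun V hV D hD => ?_⟩
  set S := ∑ j ∈ Finset.range (⌊10 * V⌋₊ + 1), D ^ j / (Nat.factorial j : ℂ) with hS
  set s := ‖S‖ with hs
  set a := Real.exp D.re with ha
  have hV0 : (0 : ℝ) < V := lt_of_lt_of_le one_pos hV
  have hR : ‖Complex.exp D - S‖ ≤ 2 * Real.exp (-12 * V) :=
    tail_bound' V hV D hD
  have hdiff : |a - s| ≤ 2 * Real.exp (-12 * V) := by
    calc |a - s| = |‖Complex.exp D‖ - ‖S‖| := by
          rw [Complex.norm_exp]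
      _ ≤ ‖Complex.exp D - S‖ := abs_norm_sub_norm_le _ _
      _ ≤ 2 * Real.exp (-12 * V) := hR
  have hre : |D.re| ≤ V := le_trans (Complex.abs_re_le_norm D) hD
  have haU : a ≤ Real.exp V := Real.exp_le_exp.mpr (le_trans (le_abs_self _) hre)
  have haL : Real.exp (-V) ≤ a := Real.exp_le_exp.mpr (by
    have := neg_abs_le D.re; linarith [abs_le.mp hre])
  have hsnn : 0 ≤ s := norm_nonneg _
  have hgoal : Real.exp (2 * D.re) = a ^ 2 := by
    rw [ha, ← Real.exp_nat_mul]
    norm_num [two_mul, Real.exp_add]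
  -- exponential relations
  have e1 : Real.exp (-12 * V) * Real.exp V = Real.exp (-11 * V) := by
    rw [← Real.exp_add]; ring_nf
  have e2 : Real.exp (-11 * V) = Real.exp (-9 * V) * Real.exp (-2 * V) := by
    rw [← Real.exp_add]; ring_nf
  have e3 : Real.exp (-2 * V) = Real.exp (-V) ^ 2 := by
    rw [← Real.exp_nat_mul]; ring_nf
  have e4 : (4 : ℝ) * Real.exp (-12 * V) ≤ Real.exp (-V) := by
    rw [show (-V : ℝ) = -12 * V + 11 * V by ring, Real.exp_add]
    have h11 : (4 : ℝ) ≤ Real.exp (11 * V) := by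
      have := Real.add_one_le_exp (11 * V)
      linarith
    nlinarith [Real.exp_pos (-12 * V)]
  have e5 : (2 : ℝ) ≤ Real.exp V := by
    have := Real.add_one_le_exp V
    linarith
  have e6 : Real.exp (-12 * V) ≤ 1 := Real.exp_le_one_iff.mpr (by nlinarith)
  -- s bounds
  have hsL : Real.exp (-V) / 2 ≤ s := by
    have := abs_le.mp hdiff
    linarith
  have hsU : s ≤ Real.exp V + 2 * Real.exp (-12 * V) := by
    have := abs_le.mp hdiff
    linarith
  have hEnn : 0 < Real.exp (-V) := Real.exp_pos _
  rw [hgoal, abs_le]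
  have hsq : Real.exp (-V) ^ 2 ≤ 4 * s ^ 2 := by nlinarith
  have hprod : 2 * Real.exp (-12 * V) * (a + s) ≤ 24 * Real.exp (-9 * V) * s ^ 2 := by
    have hb : a + s ≤ 3 * Real.exp V := by nlinarith [Real.exp_pos (-12 * V)]
    calc 2 * Real.exp (-12 * V) * (a + s)
        ≤ 2 * Real.exp (-12 * V) * (3 * Real.exp V) := by
          have := Real.exp_pos (-12 * V)
          nlinarith
      _ = 6 * (Real.exp (-9 * V) * Real.exp (-V) ^ 2) := by
          rw [← e3, ← e2, ← e1]; ring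
      _ ≤ 24 * Real.exp (-9 * V) * s ^ 2 := by
          have := Real.exp_pos (-9 * V)
          nlinarith
  constructor
  · -- -C e s^2 ≤ a^2 - s^2
    have h1 : s ^ 2 - a ^ 2 ≤ 2 * Real.exp (-12 * V) * (a + s) := by
      have := abs_le.mp hdiff
      nlinarith [Real.exp_pos D.re]
    linarith
  · have h2 : a ^ 2 - s ^ 2 ≤ 2 * Real.exp (-12 * V) * (a + s) := by
      have := abs_le.mp hdiff
      nlinarith [Real.exp_pos D.re]
    linarith
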